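/- Let E be a real inner product space, p ∈ (1, ∞) a real number, a > 0, b ≥ 0, and u, v ∈ E. Then ‖v‖^{p−2}·( p·b^{p−1}·a^{1−p}·⟨u, v⟩ − (p−1)·b^p·a^{−p}·‖v‖² ) ≤ ‖u‖^p, and equality holds if and only if u = (b/a)·v. -/
import Mathlib


open scoped RealInnerProductSpace

/-- Young-type scalar inequality with equality case: for `1 < p`, `0 ≤ x`, `0 ≤ y`,
`p * x * y^(p-1) ≤ x^p + (p-1) * y^p`, with equality iff `x = y`. -/
lemma young_aux {p x y : ℝ} (hp : 1 < p) (hx : 0 ≤ x) (hy : 0 ≤ y) :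
    p * x * y ^ (p - 1) ≤ x ^ p + (p - 1) * y ^ p ∧
      (p * x * y ^ (p - 1) = x ^ p + (p - 1) * y ^ p ↔ x = y) := by
  have hp0 : (0 : ℝ) < p := lt_trans one_pos hp
  rcases eq_or_lt_of_le hy with hy0 | hy0
  · -- y = 0
    subst hy0
    rw [Real.zero_rpow (by linarith : p - 1 ≠ 0), Real.zero_rpow hp0.ne']
    constructor
    · simpa using Real.rpow_nonneg hx p
    · rw [mul_zero, mul_zero, add_zero, eq_comm,
        Real.rpow_eq_zero_iff_of_nonneg hx]
      constructor
      · rintro ⟨h, -⟩; exact h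
      · rintro rfl; exact ⟨rfl, hp0.ne'⟩
  · -- 0 < y
    set s : ℝ := x / y - 1 with hs_def
    have hs : -1 ≤ s := by
      have : 0 ≤ x / y := div_nonneg hx hy0.le
      simp only [hs_def]; linarith
    have h1s : 1 + s = x / y := by simp [hs_def]
    have hpow : (1 + s) ^ p * y ^ p = x ^ p := by
      rw [h1s, Real.div_rpow hx hy0.le, div_mul_cancel₀]
      exact (Real.rpow_pos_of_pos hy0 p).ne'
    have hyp : y ^ p = y * y ^ (p - 1) := by
      have h := Real.rpow_add hy0 1 (p - 1)
      rw [Real.rpow_one] at h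
      rw [show p = 1 + (p - 1) by ring, h]
      ring_nf
    have hxy : x / y * y = x := div_mul_cancel₀ x hy0.ne'
    have hkey : (1 + p * s) * y ^ p = p * x * y ^ (p - 1) - (p - 1) * y ^ p := by
      rw [hs_def]
      nth_rewrite 1 [hyp]
      linear_combination (p * y ^ (p - 1)) * hxy + (p - 1) * hyp
    have hyppos : 0 < y ^ p := Real.rpow_pos_of_pos hy0 p
    have hble : 1 + p * s ≤ (1 + s) ^ p := one_add_mul_self_le_rpow_one_add hs hp.le
    have hmain : p * x * y ^ (p - 1) - (p - 1) * y ^ p ≤ x ^ p := by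
      rw [← hkey, ← hpow]
      exact mul_le_mul_of_nonneg_right hble hyppos.le
    refine ⟨by linarith, ?_⟩
    constructor
    · intro heq
      by_contra hne
      have hsne : s ≠ 0 := by
        simp only [hs_def, sub_ne_zero]
        intro h
        exact hne (by field_simp at h; linarith)
      have hstrict : 1 + p * s < (1 + s) ^ p :=
        one_add_mul_self_lt_rpow_one_add hs hsne hp
      have : p * x * y ^ (p - 1) - (p - 1) * y ^ p < x ^ p := by
        rw [← hkey, ← hpow]
        exact mul_lt_mul_of_pos_right hstrict hyppos
      linarith
    · rintro rfl
      rw [hyp]; ring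

/-- Pointwise Picone-type inequality: for `p ∈ (1, ∞)`, `a > 0`,
`b ≥ 0` and vectors `u, v` in a real inner product space,
`‖v‖^{p-2} (p b^{p-1} a^{1-p} ⟪u,v⟫ - (p-1) b^p a^{-p} ‖v‖²) ≤ ‖u‖^p`,
with equality iff `u = (b/a) • v`. -/
theorem picone_pointwise {E : Type*} [NormedAddCommGroup E]
    [InnerProductSpace ℝ E] (p a b : ℝ) (hp : 1 < p) (ha : 0 < a) (hb : 0 ≤ b)
    (u v : E) :
    ‖v‖ ^ (p - 2) *
        (p * b ^ (p - 1) * a ^ (1 - p) * ⟪u, v⟫ -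
          (p - 1) * b ^ p * a ^ (-p) * ‖v‖ ^ 2) ≤ ‖u‖ ^ p ∧
      (‖v‖ ^ (p - 2) *
          (p * b ^ (p - 1) * a ^ (1 - p) * ⟪u, v⟫ -
            (p - 1) * b ^ p * a ^ (-p) * ‖v‖ ^ 2) = ‖u‖ ^ p ↔
        u = (b / a) • v) := by
  have hp0 : (0 : ℝ) < p := lt_trans one_pos hp
  set t : ℝ := b / a with ht_def
  have ht : 0 ≤ t := div_nonneg hb ha.le
  have hcoef1 : p * b ^ (p - 1) * a ^ (1 - p) = p * t ^ (p - 1) := by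
    rw [mul_assoc, ht_def, Real.div_rpow hb ha.le,
      show (1 - p) = -(p - 1) by ring, Real.rpow_neg ha.le, div_eq_mul_inv]
  have hcoef2 : (p - 1) * b ^ p * a ^ (-p) = (p - 1) * t ^ p := by
    rw [mul_assoc, ht_def, Real.div_rpow hb ha.le, Real.rpow_neg ha.le,
      div_eq_mul_inv]
  rw [hcoef1, hcoef2]
  -- zero-equality helper
  have hzero : (0 : ℝ) ≤ ‖u‖ ^ p ∧ ((0 : ℝ) = ‖u‖ ^ p ↔ u = 0) := by
    refine ⟨Real.rpow_nonneg (norm_nonneg u) p, ?_⟩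
    rw [eq_comm, Real.rpow_eq_zero_iff_of_nonneg (norm_nonneg u), norm_eq_zero]
    exact ⟨fun h => h.1, fun h => ⟨h, hp0.ne'⟩⟩
  rcases eq_or_ne v 0 with rfl | hv
  · simp only [inner_zero_right, norm_zero, mul_zero, zero_mul, sub_zero,
      sub_self, smul_zero]
    simpa using hzero
  · have hvn : 0 < ‖v‖ := norm_pos_iff.mpr hv
    rcases eq_or_lt_of_le hb with hb0 | hb0
    · -- b = 0, so t = 0
      have ht0 : t = 0 := by rw [ht_def, ← hb0, zero_div]
      rw [ht0, Real.zero_rpow (by linarith : p - 1 ≠ 0), Real.zero_rpow hp0.ne']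
      simpa using hzero
    · -- main case: b > 0, v ≠ 0
      have ht0 : 0 < t := div_pos hb0 ha
      have hYpos : 0 < t * ‖v‖ := mul_pos ht0 hvn
      have hsq : ‖v‖ ^ (p - 2) * ‖v‖ ^ 2 = ‖v‖ ^ p := by
        rw [← Real.rpow_natCast ‖v‖ 2, ← Real.rpow_add hvn]
        norm_num
      have hvp1 : ‖v‖ ^ (p - 2) * ‖v‖ = ‖v‖ ^ (p - 1) := by
        nth_rewrite 2 [← Real.rpow_one ‖v‖]
        rw [← Real.rpow_add hvn]
        ring_nf
      have htv : (t * ‖v‖) ^ p = t ^ p * ‖v‖ ^ p :=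
        Real.mul_rpow ht (norm_nonneg v)
      have htv1 : (t * ‖v‖) ^ (p - 1) = t ^ (p - 1) * ‖v‖ ^ (p - 1) :=
        Real.mul_rpow ht (norm_nonneg v)
      have hE : ∀ w : ℝ,
          ‖v‖ ^ (p - 2) * (p * t ^ (p - 1) * w - (p - 1) * t ^ p * ‖v‖ ^ 2)
            = p * (t ^ (p - 1) * ‖v‖ ^ (p - 2)) * w - (p - 1) * (t * ‖v‖) ^ p := by
        intro w
        rw [htv, ← hsq]; ring
      have hB : p * (t ^ (p - 1) * ‖v‖ ^ (p - 2)) * (‖u‖ * ‖v‖)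
          = p * ‖u‖ * (t * ‖v‖) ^ (p - 1) := by
        rw [htv1, ← hvp1]; ring
      have hcpos : 0 < p * (t ^ (p - 1) * ‖v‖ ^ (p - 2)) :=
        mul_pos hp0 (mul_pos (Real.rpow_pos_of_pos ht0 _)
          (Real.rpow_pos_of_pos hvn _))
      have hcs : ⟪u, v⟫ ≤ ‖u‖ * ‖v‖ := real_inner_le_norm u v
      obtain ⟨hyle, hyeq⟩ := young_aux hp (norm_nonneg u) hYpos.le
      constructor
      · rw [hE]
        calc p * (t ^ (p - 1) * ‖v‖ ^ (p - 2)) * ⟪u, v⟫ - (p - 1) * (t * ‖v‖) ^ p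
            ≤ p * (t ^ (p - 1) * ‖v‖ ^ (p - 2)) * (‖u‖ * ‖v‖) - (p - 1) * (t * ‖v‖) ^ p := by
              have := mul_le_mul_of_nonneg_left hcs hcpos.le
              linarith
          _ = p * ‖u‖ * (t * ‖v‖) ^ (p - 1) - (p - 1) * (t * ‖v‖) ^ p := by rw [hB]
          _ ≤ ‖u‖ ^ p := by linarith
      · rw [hE]
        constructor
        · intro heq
          -- both inequalities must be equalities
          have h1 : ⟪u, v⟫ = ‖u‖ * ‖v‖ := by
            by_contra hne
            have hlt : ⟪u, v⟫ < ‖u‖ * ‖v‖ := lt_of_le_of_ne hcs hne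
            have h2 := mul_lt_mul_of_pos_left hlt hcpos
            have h3 : p * ‖u‖ * (t * ‖v‖) ^ (p - 1) - (p - 1) * (t * ‖v‖) ^ p
                ≤ ‖u‖ ^ p := by linarith
            rw [← hB] at h3
            linarith
          have h2 : ‖u‖ = t * ‖v‖ := by
            apply hyeq.mp
            rw [h1, hB] at heq
            linarith
          -- Cauchy-Schwarz equality: ‖v‖ • u = ‖u‖ • v
          have h3 : ‖v‖ • u = ‖u‖ • v := inner_eq_norm_mul_iff_real.mp h1
          rw [h2, mul_comm, mul_smul] at h3
          exact smul_right_injective E hvn.ne' h3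
        · rintro rfl
          have hnu : ‖t • v‖ = t * ‖v‖ := by
            rw [norm_smul, Real.norm_eq_abs, abs_of_pos ht0]
          have hinner : ⟪t • v, v⟫ = ‖t • v‖ * ‖v‖ := by
            rw [real_inner_smul_left, real_inner_self_eq_norm_mul_norm, hnu]
            ring
          have hXY : ‖t • v‖ = t * ‖v‖ := hnu
          have heq := hyeq.mpr hXY
          rw [hinner, hB]
          linarith
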